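/- Let L, ν be natural numbers with ν+1 < L, h ∈ ℂ^L, f ∈ ℂ^{ν+1}, N0 > 0, and σ ∈ (0,1]. Define ε₁ and ε₂ as below and assume ε₂ is negative definite (hence invertible). Then for every measurable W : [−π,π] → ℂ with ∫_{−π}^{π}|W(ω)|² dω < ∞ and every b ∈ ℂ^{L−ν−1} (defining B(ω) = Σ_{j=0}^{L−ν−2} b_j e^{iω(ν+1+j)}), one has I_LB(W,F,B) ≤ J(F) − ε₁†·ε₂⁻¹·ε₁, where J(F) = 1 + (1/2π)∫_{−π}^{π}[log(1+|F(ω)|²) + M(ω)·(1+|F(ω)|²)] dω. -/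

import Mathlib

open Complex Real MeasureTheory Matrix
open scoped ComplexOrder

/-- DTFT of the channel taps `h ∈ ℂ^L`. -/
noncomputable def Hdtft {L : ℕ} (h : Fin L → ℂ) (ω : ℝ) : ℂ :=
  ∑ ℓ : Fin L, h ℓ * Complex.exp (Complex.I * (ω : ℂ) * ((ℓ : ℕ) : ℂ))

/-- DTFT of the target-response taps `f ∈ ℂ^{ν+1}`. -/
noncomputable def Fdtft {ν : ℕ} (f : Fin (ν + 1) → ℂ) (ω : ℝ) : ℂ :=
  ∑ k : Fin (ν + 1), f k * Complex.exp (Complex.I * (ω : ℂ) * ((k : ℕ) : ℂ))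

/-- DTFT of the feedback-filter taps `b ∈ ℂ^{L−ν−1}` (supported on taps ν+1,…,L−1). -/
noncomputable def Bdtft {L ν : ℕ} (b : Fin (L - ν - 1) → ℂ) (ω : ℝ) : ℂ :=
  ∑ j : Fin (L - ν - 1), b j * Complex.exp (Complex.I * (ω : ℂ) * ((ν + 1 + (j : ℕ) : ℕ) : ℂ))

/-- The LMMSE kernel `M(ω) = −N0/(N0+|H(ω)|²)`. -/
noncomputable def Mker (N0 : ℝ) (H : ℝ → ℂ) (ω : ℝ) : ℝ :=
  -N0 / (N0 + ‖H ω‖ ^ 2)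

/-- `M̃(ω) = σ²(1+M(ω)) − σ`. -/
noncomputable def Mtker (N0 σ : ℝ) (H : ℝ → ℂ) (ω : ℝ) : ℝ :=
  σ ^ 2 * (1 + Mker N0 H ω) - σ

/-- The exponential vector `φ(ω) = (e^{iω(ν+1)},…,e^{iω(L−1)})ᵀ`. -/
noncomputable def phiVec (L ν : ℕ) (j : Fin (L - ν - 1)) (ω : ℝ) : ℂ :=
  Complex.exp (Complex.I * (ω : ℂ) * ((ν + 1 + (j : ℕ) : ℕ) : ℂ))

/-- The vector `ε₁ = (σ/2π)∫ M conj(F) φ dω`. -/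
noncomputable def eps1 (L ν : ℕ) (N0 σ : ℝ) (H F : ℝ → ℂ) (j : Fin (L - ν - 1)) : ℂ :=
  ((σ / (2 * π) : ℝ) : ℂ) *
    ∫ ω in (-π)..π, ((Mker N0 H ω : ℝ) : ℂ) * (starRingEnd ℂ) (F ω) * phiVec L ν j ω

/-- The matrix `ε₂ = (1/2π)∫ (M̃|F|²/(1+|F|²)) φ φ† dω`. -/
noncomputable def eps2 (L ν : ℕ) (N0 σ : ℝ) (H F : ℝ → ℂ) :
    Matrix (Fin (L - ν - 1)) (Fin (L - ν - 1)) ℂ := fun j k =>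
  ((1 / (2 * π) : ℝ) : ℂ) *
    ∫ ω in (-π)..π,
      ((Mtker N0 σ H ω * ‖F ω‖ ^ 2 / (1 + ‖F ω‖ ^ 2) : ℝ) : ℂ) *
        (phiVec L ν j ω * (starRingEnd ℂ) (phiVec L ν k ω))

/-- The quantity `Λ(ω)` appearing in the MILB. -/
noncomputable def Lam (N0 σ : ℝ) (W H F B : ℝ → ℂ) (ω : ℝ) : ℝ :=
  ‖F ω * W ω‖ ^ 2 * (N0 + ‖H ω‖ ^ 2) +
    σ * ‖F ω * B ω‖ ^ 2 -
    2 * σ * ‖F ω‖ ^ 2 * (H ω * W ω * (starRingEnd ℂ) (B ω)).re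

/-- The mutual-information lower bound functional `I_LB(W,F,B)`. -/
noncomputable def ILB (N0 σ : ℝ) (W H F B : ℝ → ℂ) : ℝ :=
  (1 / (2 * π)) *
      ∫ ω in (-π)..π,
        (Real.log (1 + ‖F ω‖ ^ 2) - ‖F ω‖ ^ 2 -
          Lam N0 σ W H F B ω / (1 + ‖F ω‖ ^ 2)) +
    (1 / π) *
      ∫ ω in (-π)..π, ((starRingEnd ℂ) (F ω) * (W ω * H ω - (σ : ℂ) * B ω)).re

/-- `J(F) = 1 + (1/2π)∫ [log(1+|F|²) + M(1+|F|²)]`. -/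
noncomputable def Jfun (N0 : ℝ) (H F : ℝ → ℂ) : ℝ :=
  1 + (1 / (2 * π)) *
    ∫ ω in (-π)..π,
      (Real.log (1 + ‖F ω‖ ^ 2) + Mker N0 H ω * (1 + ‖F ω‖ ^ 2))

/-! ### Auxiliary definitions -/

/-- First integrand of `ILB`. -/
noncomputable def g1f (N0 σ : ℝ) (W H F B : ℝ → ℂ) (ω : ℝ) : ℝ :=
  Real.log (1 + ‖F ω‖ ^ 2) - ‖F ω‖ ^ 2 -
    Lam N0 σ W H F B ω / (1 + ‖F ω‖ ^ 2)

/-- Second integrand of `ILB`. -/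
noncomputable def rf (σ : ℝ) (W H F B : ℝ → ℂ) (ω : ℝ) : ℝ :=
  ((starRingEnd ℂ) (F ω) * (W ω * H ω - (σ : ℂ) * B ω)).re

/-- First part of the optimized integrand. -/
noncomputable def u1f (N0 : ℝ) (H F : ℝ → ℂ) (ω : ℝ) : ℝ :=
  1 + (Real.log (1 + ‖F ω‖ ^ 2) + Mker N0 H ω * (1 + ‖F ω‖ ^ 2))

/-- Second (linear in `b`) part of the optimized integrand. -/
noncomputable def u2f (N0 σ : ℝ) (H F B : ℝ → ℂ) (ω : ℝ) : ℝ :=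
  2 * σ * Mker N0 H ω * (F ω * (starRingEnd ℂ) (B ω)).re

/-- Third (quadratic in `b`) part of the optimized integrand. -/
noncomputable def u3f (N0 σ : ℝ) (H F B : ℝ → ℂ) (ω : ℝ) : ℝ :=
  (Mtker N0 σ H ω * ‖F ω‖ ^ 2 / (1 + ‖F ω‖ ^ 2)) *
    ‖B ω‖ ^ 2

/-! ### Matrix completing-the-square bound -/

lemma quad_bound {n : Type*} [Fintype n] [DecidableEq n] {S : Matrix n n ℂ}
    (hND : (-S).PosDef) (x c : n → ℂ) :
    (star c ⬝ᵥ S *ᵥ c).re + 2 * (star c ⬝ᵥ x).re ≤ - (star x ⬝ᵥ S⁻¹ *ᵥ x).re := by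
  have hH : Sᴴ = S := by
    have h1 : (-S)ᴴ = -S := hND.isHermitian
    rw [conjTranspose_neg] at h1
    exact neg_injective h1
  have hUnit : IsUnit S := by simpa using hND.isUnit.neg
  have hdet : IsUnit S.det := (Matrix.isUnit_iff_isUnit_det S).mp hUnit
  have hSinv : S⁻¹ᴴ = S⁻¹ := by rw [conjTranspose_nonsing_inv, hH]
  set v := c + S⁻¹ *ᵥ x with hv
  have hsv : S *ᵥ v = S *ᵥ c + x := by
    rw [hv, mulVec_add, mulVec_mulVec, Matrix.mul_nonsing_inv _ hdet, one_mulVec]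
  have hexp : star v ⬝ᵥ S *ᵥ v =
      star c ⬝ᵥ S *ᵥ c + star c ⬝ᵥ x + (star x ⬝ᵥ c + star x ⬝ᵥ S⁻¹ *ᵥ x) := by
    rw [hsv, hv, star_add, star_mulVec, hSinv, add_dotProduct, dotProduct_add, dotProduct_add]
    have h1 : (star x ᵥ* S⁻¹) ⬝ᵥ (S *ᵥ c) = star x ⬝ᵥ c := by
      rw [← dotProduct_mulVec, mulVec_mulVec, Matrix.nonsing_inv_mul _ hdet, one_mulVec]
    have h2 : (star x ᵥ* S⁻¹) ⬝ᵥ x = star x ⬝ᵥ S⁻¹ *ᵥ x := (dotProduct_mulVec _ _ _).symm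
    rw [h1, h2]
  have hre : (star x ⬝ᵥ c).re = (star c ⬝ᵥ x).re := by
    have h3 : star x ⬝ᵥ c = star (star c ⬝ᵥ x) := by
      simp only [dotProduct, star_sum, star_mul', star_star]
      exact Finset.sum_congr rfl fun i _ => by simp [Pi.star_apply, mul_comm]
    rw [h3]
    exact Complex.conj_re _
  have hneg : (star v ⬝ᵥ S *ᵥ v).re ≤ 0 := by
    have h0 := hND.posSemidef.re_dotProduct_nonneg v
    have h4 : star v ⬝ᵥ (-S) *ᵥ v = -(star v ⬝ᵥ S *ᵥ v) := by
      rw [neg_mulVec, dotProduct_neg]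
    rw [h4] at h0
    simp only [RCLike.re_to_complex, Complex.neg_re] at h0
    linarith
  have hre2 := congrArg Complex.re hexp
  simp only [Complex.add_re] at hre2
  linarith

/-! ### The pointwise completing-the-square identity and inequality -/

lemma normSq_ident (N0 s : ℝ) (F W H B : ℂ) (hS0 : (N0 + Complex.normSq H) ≠ 0) :
    Complex.normSq (((Complex.normSq F * (N0 + Complex.normSq H) : ℝ) : ℂ) * W
        - (starRingEnd ℂ) H * F *
          (((1 + Complex.normSq F : ℝ) : ℂ) + (s : ℂ) * (starRingEnd ℂ) F * B))
      = Complex.normSq F * (N0 + Complex.normSq H) * (1 + Complex.normSq F) *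
        ((1 + (-N0 / (N0 + Complex.normSq H)) * (1 + Complex.normSq F)
            + 2 * s * (-N0 / (N0 + Complex.normSq H)) * (F * (starRingEnd ℂ) B).re
            + (s ^ 2 * (1 + -N0 / (N0 + Complex.normSq H)) - s) * Complex.normSq F *
                Complex.normSq B / (1 + Complex.normSq F))
         - (-Complex.normSq F -
              (Complex.normSq (F * W) * (N0 + Complex.normSq H) + s * Complex.normSq (F * B)
                - 2 * s * Complex.normSq F * (H * W * (starRingEnd ℂ) B).re) /
                (1 + Complex.normSq F)
            + 2 * ((starRingEnd ℂ) F * (W * H - (s : ℂ) * B)).re)) := by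
  have hA : (1 + Complex.normSq F) ≠ 0 := by nlinarith [Complex.normSq_nonneg F]
  field_simp
  simp only [Complex.normSq_apply, Complex.mul_re, Complex.mul_im, Complex.add_re,
    Complex.add_im, Complex.sub_re, Complex.sub_im, Complex.ofReal_re, Complex.ofReal_im,
    Complex.conj_re, Complex.conj_im, Complex.one_re, Complex.one_im]
  ring

lemma key_ineq (N0 s : ℝ) (hN0 : 0 < N0) (F W H B : ℂ) :
    (Real.log (1 + ‖F‖ ^ 2) - ‖F‖ ^ 2 -
        (‖F * W‖ ^ 2 * (N0 + ‖H‖ ^ 2) + s * ‖F * B‖ ^ 2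
          - 2 * s * ‖F‖ ^ 2 * (H * W * (starRingEnd ℂ) B).re) /
          (1 + ‖F‖ ^ 2))
      + 2 * ((starRingEnd ℂ) F * (W * H - (s : ℂ) * B)).re
    ≤ 1 + Real.log (1 + ‖F‖ ^ 2)
        + (-N0 / (N0 + ‖H‖ ^ 2)) * (1 + ‖F‖ ^ 2)
        + 2 * s * (-N0 / (N0 + ‖H‖ ^ 2)) * (F * (starRingEnd ℂ) B).re
        + (s ^ 2 * (1 + -N0 / (N0 + ‖H‖ ^ 2)) - s) * ‖F‖ ^ 2 *
            ‖B‖ ^ 2 / (1 + ‖F‖ ^ 2) := by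
  simp only [Complex.sq_norm]
  have hSpos : 0 < N0 + Complex.normSq H := by nlinarith [Complex.normSq_nonneg H]
  have hApos : (0:ℝ) < 1 + Complex.normSq F := by nlinarith [Complex.normSq_nonneg F]
  rcases eq_or_ne (Complex.normSq F) 0 with hF0 | hFne
  · have hF : F = 0 := Complex.normSq_eq_zero.mp hF0
    subst hF
    simp only [Complex.normSq_zero, map_zero, zero_mul, mul_zero,
      zero_add, add_zero, zero_div, sub_zero, Complex.zero_re, zero_sub, neg_zero]
    have h1 : N0 / (N0 + Complex.normSq H) ≤ 1 := by
      rw [div_le_one hSpos]; nlinarith [Complex.normSq_nonneg H]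
    have h3 : -N0 / (N0 + Complex.normSq H) = -(N0 / (N0 + Complex.normSq H)) := by ring
    rw [h3]
    linarith
  · have hFpos : 0 < Complex.normSq F := lt_of_le_of_ne (Complex.normSq_nonneg F) (Ne.symm hFne)
    have hid := normSq_ident N0 s F W H B (ne_of_gt hSpos)
    have hX := Complex.normSq_nonneg (((Complex.normSq F * (N0 + Complex.normSq H) : ℝ) : ℂ) * W
        - (starRingEnd ℂ) H * F *
          (((1 + Complex.normSq F : ℝ) : ℂ) + (s : ℂ) * (starRingEnd ℂ) F * B))
    rw [hid] at hX
    have hk : 0 < Complex.normSq F * (N0 + Complex.normSq H) * (1 + Complex.normSq F) := by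
      positivity
    have := (mul_nonneg_iff_of_pos_left hk).mp hX
    linarith

/-! ### Continuity facts -/

lemma cont_cexp (c : ℂ) : Continuous fun ω : ℝ => Complex.exp (Complex.I * (ω : ℂ) * c) :=
  Complex.continuous_exp.comp ((continuous_const.mul Complex.continuous_ofReal).mul
    continuous_const)

lemma cont_Hdtft {L : ℕ} (h : Fin L → ℂ) : Continuous (Hdtft h) :=
  continuous_finset_sum _ fun i _ => continuous_const.mul (cont_cexp _)

lemma cont_Fdtft {ν : ℕ} (f : Fin (ν + 1) → ℂ) : Continuous (Fdtft f) :=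
  continuous_finset_sum _ fun i _ => continuous_const.mul (cont_cexp _)

lemma cont_Bdtft {L ν : ℕ} (b : Fin (L - ν - 1) → ℂ) :
    Continuous (Bdtft (L := L) (ν := ν) b) :=
  continuous_finset_sum _ fun i _ => continuous_const.mul (cont_cexp _)

lemma cont_phiVec (L ν : ℕ) (j : Fin (L - ν - 1)) : Continuous (phiVec L ν j) :=
  cont_cexp _

lemma Spos {N0 : ℝ} (hN0 : 0 < N0) (H : ℝ → ℂ) (ω : ℝ) :
    0 < N0 + ‖H ω‖ ^ 2 := by
  nlinarith [sq_nonneg (‖H ω‖)]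

lemma cont_Mker {N0 : ℝ} (hN0 : 0 < N0) {H : ℝ → ℂ} (hH : Continuous H) :
    Continuous (Mker N0 H) :=
  continuous_const.div (continuous_const.add ((continuous_norm.comp hH).pow 2))
    fun ω => ne_of_gt (Spos hN0 H ω)

lemma cont_Mtker {N0 : ℝ} (σ : ℝ) (hN0 : 0 < N0) {H : ℝ → ℂ} (hH : Continuous H) :
    Continuous (Mtker N0 σ H) :=
  (continuous_const.mul (continuous_const.add (cont_Mker hN0 hH))).sub continuous_const

lemma Apos (F : ℝ → ℂ) (ω : ℝ) : 0 < 1 + ‖F ω‖ ^ 2 := by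
  nlinarith [sq_nonneg (‖F ω‖)]

lemma cont_A {F : ℝ → ℂ} (hF : Continuous F) :
    Continuous fun ω => 1 + ‖F ω‖ ^ 2 :=
  continuous_const.add ((continuous_norm.comp hF).pow 2)

lemma cont_u1f {N0 : ℝ} (hN0 : 0 < N0) {H F : ℝ → ℂ} (hH : Continuous H)
    (hF : Continuous F) : Continuous (u1f N0 H F) := by
  unfold u1f
  exact continuous_const.add (((cont_A hF).log fun ω => ne_of_gt (Apos F ω)).add
    ((cont_Mker hN0 hH).mul (cont_A hF)))

lemma cont_u2f {N0 : ℝ} (σ : ℝ) (hN0 : 0 < N0) {H F B : ℝ → ℂ} (hH : Continuous H)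
    (hF : Continuous F) (hB : Continuous B) : Continuous (u2f N0 σ H F B) := by
  unfold u2f
  exact (continuous_const.mul (cont_Mker hN0 hH)).mul
    (Complex.continuous_re.comp (hF.mul (Complex.continuous_conj.comp hB)))

lemma cont_Kf {N0 : ℝ} (σ : ℝ) (hN0 : 0 < N0) {H F : ℝ → ℂ} (hH : Continuous H)
    (hF : Continuous F) :
    Continuous fun ω => Mtker N0 σ H ω * ‖F ω‖ ^ 2 / (1 + ‖F ω‖ ^ 2) :=
  ((cont_Mtker σ hN0 hH).mul ((continuous_norm.comp hF).pow 2)).div (cont_A hF)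
    fun ω => ne_of_gt (Apos F ω)

lemma cont_u3f {N0 : ℝ} (σ : ℝ) (hN0 : 0 < N0) {H F B : ℝ → ℂ} (hH : Continuous H)
    (hF : Continuous F) (hB : Continuous B) : Continuous (u3f N0 σ H F B) := by
  unfold u3f
  exact (cont_Kf σ hN0 hH hF).mul ((continuous_norm.comp hB).pow 2)

/-! ### Integrability facts for the `W`-dependent integrands -/

lemma uIoc_subset_Icc : Set.uIoc (-π) π ⊆ Set.Icc (-π) π := by
  rw [Set.uIoc_of_le (by linarith [Real.pi_pos] : (-π : ℝ) ≤ π)]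
  exact Set.Ioc_subset_Icc_self

lemma sq_abs_le (a : ℝ) (ha : 0 ≤ a) : a ≤ 1 + a ^ 2 := by nlinarith

lemma integ_c_mul_sq {W : ℝ → ℂ} (hWm : Measurable W)
    (hW2 : IntegrableOn (fun ω => ‖W ω‖ ^ 2) (Set.Icc (-π) π))
    {c : ℝ → ℝ} (hc : Continuous c) :
    IntervalIntegrable (fun ω => c ω * ‖W ω‖ ^ 2) volume (-π) π := by
  rw [intervalIntegrable_iff]
  obtain ⟨C, hC⟩ := (isCompact_Icc : IsCompact (Set.Icc (-π) π)).exists_bound_of_continuousOn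
    hc.continuousOn
  refine Integrable.mono' (((hW2.mono_set uIoc_subset_Icc).const_mul C)) ?_ ?_
  · exact ((hc.measurable.mul
      ((continuous_norm.measurable.comp hWm).pow_const 2))).aestronglyMeasurable
  · filter_upwards [MeasureTheory.ae_restrict_mem measurableSet_uIoc] with ω hω
    have h1 := hC ω (uIoc_subset_Icc hω)
    rw [Real.norm_eq_abs, abs_mul,
      _root_.abs_of_nonneg (by positivity : (0:ℝ) ≤ ‖W ω‖ ^ 2)]
    exact mul_le_mul_of_nonneg_right (by simpa [Real.norm_eq_abs] using h1) (by positivity)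

lemma integ_c_mul_W {W : ℝ → ℂ} (hWm : Measurable W)
    (hW2 : IntegrableOn (fun ω => ‖W ω‖ ^ 2) (Set.Icc (-π) π))
    {c : ℝ → ℂ} (hc : Continuous c) :
    IntervalIntegrable (fun ω => (c ω * W ω).re) volume (-π) π := by
  rw [intervalIntegrable_iff]
  obtain ⟨C, hC⟩ := (isCompact_Icc : IsCompact (Set.Icc (-π) π)).exists_bound_of_continuousOn
    hc.continuousOn
  have hC0 : 0 ≤ C := le_trans (norm_nonneg (c 0))
    (hC 0 ⟨by linarith [Real.pi_pos], by linarith [Real.pi_pos]⟩)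
  have hint : IntegrableOn (fun ω => C * (1 + ‖W ω‖ ^ 2)) (Set.uIoc (-π) π) := by
    refine (Integrable.const_mul ?_ C)
    have : IntegrableOn (fun ω => 1 + ‖W ω‖ ^ 2) (Set.Icc (-π) π) :=
      (integrableOn_const measure_Icc_lt_top.ne).add hW2
    exact this.mono_set uIoc_subset_Icc
  refine Integrable.mono' hint ?_ ?_
  · exact (Complex.measurable_re.comp ((hc.measurable).mul hWm)).aestronglyMeasurable
  · filter_upwards [MeasureTheory.ae_restrict_mem measurableSet_uIoc] with ω hω
    have h1 := hC ω (uIoc_subset_Icc hω)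
    have h2 : ‖(c ω * W ω).re‖ ≤ ‖c ω * W ω‖ := Complex.abs_re_le_norm _
    rw [norm_mul] at h2
    have h3 : ‖c ω‖ * ‖W ω‖ ≤ C * (1 + ‖W ω‖ ^ 2) := by
      have h4 : ‖W ω‖ ≤ 1 + ‖W ω‖ ^ 2 :=
        sq_abs_le _ (norm_nonneg _)
      have h5 : ‖c ω‖ ≤ C := by simpa using h1
      nlinarith [norm_nonneg (W ω), norm_nonneg (c ω)]
    exact le_trans h2 h3

lemma integ_g1f {N0 σ : ℝ} (hN0 : 0 < N0) {W H F B : ℝ → ℂ} (hWm : Measurable W)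
    (hW2 : IntegrableOn (fun ω => ‖W ω‖ ^ 2) (Set.Icc (-π) π))
    (hH : Continuous H) (hF : Continuous F) (hB : Continuous B) :
    IntervalIntegrable (g1f N0 σ W H F B) volume (-π) π := by
  have hA : ∀ ω, (0:ℝ) < 1 + ‖F ω‖ ^ 2 := Apos F
  have hdecomp : ∀ ω, g1f N0 σ W H F B ω =
      (Real.log (1 + ‖F ω‖ ^ 2) -
        ‖F ω‖ ^ 2 - σ * ‖F ω * B ω‖ ^ 2 / (1 + ‖F ω‖ ^ 2))
      + (-(‖F ω‖ ^ 2 * (N0 + ‖H ω‖ ^ 2) / (1 + ‖F ω‖ ^ 2)))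
          * ‖W ω‖ ^ 2
      + ((((2 * σ * ‖F ω‖ ^ 2 / (1 + ‖F ω‖ ^ 2) : ℝ) : ℂ) *
            (H ω * (starRingEnd ℂ) (B ω))) * W ω).re := by
    intro ω
    unfold g1f Lam
    have hAne := ne_of_gt (hA ω)
    simp only [Complex.sq_norm, Complex.normSq_apply, Complex.mul_re, Complex.mul_im,
      Complex.conj_re, Complex.conj_im, Complex.ofReal_re, Complex.ofReal_im]
    field_simp
    ring
  have h1 : Continuous fun ω => Real.log (1 + ‖F ω‖ ^ 2) -
      ‖F ω‖ ^ 2 - σ * ‖F ω * B ω‖ ^ 2 / (1 + ‖F ω‖ ^ 2) := by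
    refine (((cont_A hF).log fun ω => ne_of_gt (hA ω)).sub
      ((continuous_norm.comp hF).pow 2)).sub ?_
    exact (continuous_const.mul ((continuous_norm.comp (hF.mul hB)).pow 2)).div
      (cont_A hF) fun ω => ne_of_gt (hA ω)
  have h2 : Continuous fun ω =>
      -(‖F ω‖ ^ 2 * (N0 + ‖H ω‖ ^ 2) / (1 + ‖F ω‖ ^ 2)) :=
    (((continuous_norm.comp hF).pow 2).mul
      (continuous_const.add ((continuous_norm.comp hH).pow 2))).div (cont_A hF)
      (fun ω => ne_of_gt (hA ω)) |>.neg
  have h3 : Continuous fun ω =>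
      (((2 * σ * ‖F ω‖ ^ 2 / (1 + ‖F ω‖ ^ 2) : ℝ) : ℂ) *
        (H ω * (starRingEnd ℂ) (B ω))) := by
    refine (Complex.continuous_ofReal.comp ?_).mul (hH.mul (Complex.continuous_conj.comp hB))
    exact (continuous_const.mul ((continuous_norm.comp hF).pow 2)).div (cont_A hF)
      fun ω => ne_of_gt (hA ω)
  have heq : g1f N0 σ W H F B = fun ω =>
      (Real.log (1 + ‖F ω‖ ^ 2) -
        ‖F ω‖ ^ 2 - σ * ‖F ω * B ω‖ ^ 2 / (1 + ‖F ω‖ ^ 2))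
      + (-(‖F ω‖ ^ 2 * (N0 + ‖H ω‖ ^ 2) / (1 + ‖F ω‖ ^ 2)))
          * ‖W ω‖ ^ 2
      + ((((2 * σ * ‖F ω‖ ^ 2 / (1 + ‖F ω‖ ^ 2) : ℝ) : ℂ) *
            (H ω * (starRingEnd ℂ) (B ω))) * W ω).re := funext hdecomp
  rw [heq]
  exact ((h1.intervalIntegrable (-π) π).add (integ_c_mul_sq hWm hW2 h2)).add
    (integ_c_mul_W hWm hW2 h3)

lemma integ_rf {σ : ℝ} {W H F B : ℝ → ℂ} (hWm : Measurable W)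
    (hW2 : IntegrableOn (fun ω => ‖W ω‖ ^ 2) (Set.Icc (-π) π))
    (hH : Continuous H) (hF : Continuous F) (hB : Continuous B) :
    IntervalIntegrable (rf σ W H F B) volume (-π) π := by
  have hdecomp : ∀ ω, rf σ W H F B ω =
      (((starRingEnd ℂ) (F ω) * H ω) * W ω).re +
        (-(((σ : ℂ) * ((starRingEnd ℂ) (F ω) * B ω)).re)) := by
    intro ω
    unfold rf
    have : (starRingEnd ℂ) (F ω) * (W ω * H ω - (σ : ℂ) * B ω) =
        ((starRingEnd ℂ) (F ω) * H ω) * W ω - (σ : ℂ) * ((starRingEnd ℂ) (F ω) * B ω) := by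
      ring
    rw [this, Complex.sub_re]
    ring
  have heq : rf σ W H F B = fun ω =>
      (((starRingEnd ℂ) (F ω) * H ω) * W ω).re +
        (-(((σ : ℂ) * ((starRingEnd ℂ) (F ω) * B ω)).re)) := funext hdecomp
  rw [heq]
  refine (integ_c_mul_W hWm hW2 ((Complex.continuous_conj.comp hF).mul hH)).add ?_
  exact ((Complex.continuous_re.comp
    (continuous_const.mul ((Complex.continuous_conj.comp hF).mul hB))).neg).intervalIntegrable _ _


/-! ### Identification of the `b`-dependent integrals -/

lemma E2lem (L ν : ℕ) {N0 : ℝ} (σ : ℝ) (hN0 : 0 < N0) {H F : ℝ → ℂ}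
    (hH : Continuous H) (hF : Continuous F) (b : Fin (L - ν - 1) → ℂ) :
    (1 / (2 * π)) * ∫ ω in (-π)..π, u2f N0 σ H F (Bdtft (L := L) (ν := ν) b) ω
      = 2 * (b ⬝ᵥ eps1 L ν N0 σ H F).re := by
  have hψcont : ∀ j : Fin (L - ν - 1), Continuous fun ω =>
      ((Mker N0 H ω : ℝ) : ℂ) * (starRingEnd ℂ) (F ω) * phiVec L ν j ω := fun j =>
    ((Complex.continuous_ofReal.comp (cont_Mker hN0 hH)).mul
      (Complex.continuous_conj.comp hF)).mul (cont_phiVec L ν j)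
  have hptw : ∀ ω, u2f N0 σ H F (Bdtft (L := L) (ν := ν) b) ω =
      ∑ j : Fin (L - ν - 1), 2 * σ *
        (b j * (((Mker N0 H ω : ℝ) : ℂ) * (starRingEnd ℂ) (F ω) * phiVec L ν j ω)).re := by
    intro ω
    unfold u2f Bdtft phiVec
    rw [map_sum, Finset.mul_sum, Complex.re_sum, Finset.mul_sum]
    refine Finset.sum_congr rfl fun j _ => ?_
    simp only [_root_.map_mul, Complex.mul_re, Complex.mul_im, Complex.conj_re, Complex.conj_im,
      Complex.ofReal_re, Complex.ofReal_im]
    ring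
  rw [intervalIntegral.integral_congr (fun ω _ => hptw ω)]
  have hIsum : ∀ j ∈ (Finset.univ : Finset (Fin (L - ν - 1))), IntervalIntegrable
      (fun ω => 2 * σ *
        (b j * (((Mker N0 H ω : ℝ) : ℂ) * (starRingEnd ℂ) (F ω) * phiVec L ν j ω)).re)
      volume (-π) π := by
    intro j _
    exact (continuous_const.mul (Complex.continuous_re.comp
      (continuous_const.mul (hψcont j)))).intervalIntegrable _ _
  rw [intervalIntegral.integral_finset_sum hIsum]
  have hj : ∀ j : Fin (L - ν - 1),
      (∫ ω in (-π)..π, 2 * σ *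
        (b j * (((Mker N0 H ω : ℝ) : ℂ) * (starRingEnd ℂ) (F ω) * phiVec L ν j ω)).re)
      = 2 * σ * (b j * ∫ ω in (-π)..π,
          ((Mker N0 H ω : ℝ) : ℂ) * (starRingEnd ℂ) (F ω) * phiVec L ν j ω).re := by
    intro j
    rw [intervalIntegral.integral_const_mul]
    congr 1
    have hint : IntervalIntegrable (fun ω =>
        b j * (((Mker N0 H ω : ℝ) : ℂ) * (starRingEnd ℂ) (F ω) * phiVec L ν j ω))
        volume (-π) π := (continuous_const.mul (hψcont j)).intervalIntegrable _ _
    have hcomm := Complex.reCLM.intervalIntegral_comp_comm hint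
    simp only [Complex.reCLM_apply] at hcomm
    rw [hcomm, intervalIntegral.integral_const_mul]
  simp only [hj]
  rw [dotProduct, Complex.re_sum, Finset.mul_sum, Finset.mul_sum]
  refine Finset.sum_congr rfl fun j _ => ?_
  unfold eps1
  rw [show b j * (((σ / (2 * π) : ℝ) : ℂ) *
      ∫ ω in (-π)..π, ((Mker N0 H ω : ℝ) : ℂ) * (starRingEnd ℂ) (F ω) * phiVec L ν j ω)
    = ((σ / (2 * π) : ℝ) : ℂ) * (b j *
      ∫ ω in (-π)..π, ((Mker N0 H ω : ℝ) : ℂ) * (starRingEnd ℂ) (F ω) * phiVec L ν j ω) by ring]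
  rw [Complex.re_ofReal_mul]
  ring

lemma E3lem (L ν : ℕ) {N0 : ℝ} (σ : ℝ) (hN0 : 0 < N0) {H F : ℝ → ℂ}
    (hH : Continuous H) (hF : Continuous F) (b : Fin (L - ν - 1) → ℂ) :
    (1 / (2 * π)) * ∫ ω in (-π)..π, u3f N0 σ H F (Bdtft (L := L) (ν := ν) b) ω
      = (b ⬝ᵥ (eps2 L ν N0 σ H F *ᵥ star b)).re := by
  have hKcont := cont_Kf σ hN0 hH hF
  have hζcont : ∀ j k : Fin (L - ν - 1), Continuous fun ω =>
      ((Mtker N0 σ H ω * ‖F ω‖ ^ 2 / (1 + ‖F ω‖ ^ 2) : ℝ) : ℂ) *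
        (phiVec L ν j ω * (starRingEnd ℂ) (phiVec L ν k ω)) := fun j k =>
    (Complex.continuous_ofReal.comp hKcont).mul
      ((cont_phiVec L ν j).mul (Complex.continuous_conj.comp (cont_phiVec L ν k)))
  have hBd : ∀ ω, Bdtft (L := L) (ν := ν) b ω = ∑ j : Fin (L - ν - 1), b j * phiVec L ν j ω :=
    fun ω => rfl
  have hptw : ∀ ω, u3f N0 σ H F (Bdtft (L := L) (ν := ν) b) ω =
      ∑ j : Fin (L - ν - 1), ∑ k : Fin (L - ν - 1),
        (b j * (starRingEnd ℂ) (b k) *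
          (((Mtker N0 σ H ω * ‖F ω‖ ^ 2 / (1 + ‖F ω‖ ^ 2) : ℝ) : ℂ) *
            (phiVec L ν j ω * (starRingEnd ℂ) (phiVec L ν k ω)))).re := by
    intro ω
    have h1 : ‖Bdtft (L := L) (ν := ν) b ω‖ ^ 2 =
        (Bdtft (L := L) (ν := ν) b ω * (starRingEnd ℂ) (Bdtft (L := L) (ν := ν) b ω)).re := by
      rw [Complex.mul_conj, Complex.sq_norm, Complex.ofReal_re]
    unfold u3f
    rw [h1, hBd, map_sum, Finset.sum_mul_sum, Complex.re_sum, Finset.mul_sum]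
    refine Finset.sum_congr rfl fun j _ => ?_
    rw [Complex.re_sum, Finset.mul_sum]
    refine Finset.sum_congr rfl fun k _ => ?_
    simp only [_root_.map_mul, Complex.mul_re, Complex.mul_im, Complex.conj_re, Complex.conj_im,
      Complex.ofReal_re, Complex.ofReal_im]
    ring
  rw [intervalIntegral.integral_congr (fun ω _ => hptw ω)]
  have hIsum : ∀ j ∈ (Finset.univ : Finset (Fin (L - ν - 1))), IntervalIntegrable
      (fun ω => ∑ k : Fin (L - ν - 1),
        (b j * (starRingEnd ℂ) (b k) *
          (((Mtker N0 σ H ω * ‖F ω‖ ^ 2 / (1 + ‖F ω‖ ^ 2) : ℝ) : ℂ) *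
            (phiVec L ν j ω * (starRingEnd ℂ) (phiVec L ν k ω)))).re)
      volume (-π) π := by
    intro j _
    exact (continuous_finset_sum _ fun k _ => Complex.continuous_re.comp
      (continuous_const.mul (hζcont j k))).intervalIntegrable _ _
  rw [intervalIntegral.integral_finset_sum hIsum]
  have hswap : ∀ j : Fin (L - ν - 1),
      (∫ ω in (-π)..π, ∑ k : Fin (L - ν - 1),
        (b j * (starRingEnd ℂ) (b k) *
          (((Mtker N0 σ H ω * ‖F ω‖ ^ 2 / (1 + ‖F ω‖ ^ 2) : ℝ) : ℂ) *
            (phiVec L ν j ω * (starRingEnd ℂ) (phiVec L ν k ω)))).re)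
      = ∑ k : Fin (L - ν - 1), (b j * (starRingEnd ℂ) (b k) *
          ∫ ω in (-π)..π,
            (((Mtker N0 σ H ω * ‖F ω‖ ^ 2 / (1 + ‖F ω‖ ^ 2) : ℝ) : ℂ) *
              (phiVec L ν j ω * (starRingEnd ℂ) (phiVec L ν k ω)))).re := by
    intro j
    have hIsum2 : ∀ k ∈ (Finset.univ : Finset (Fin (L - ν - 1))), IntervalIntegrable
        (fun ω => (b j * (starRingEnd ℂ) (b k) *
          (((Mtker N0 σ H ω * ‖F ω‖ ^ 2 / (1 + ‖F ω‖ ^ 2) : ℝ) : ℂ) *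
            (phiVec L ν j ω * (starRingEnd ℂ) (phiVec L ν k ω)))).re)
        volume (-π) π := by
      intro k _
      exact (Complex.continuous_re.comp (continuous_const.mul (hζcont j k))).intervalIntegrable _ _
    rw [intervalIntegral.integral_finset_sum hIsum2]
    refine Finset.sum_congr rfl fun k _ => ?_
    have hint : IntervalIntegrable (fun ω =>
        b j * (starRingEnd ℂ) (b k) *
          (((Mtker N0 σ H ω * ‖F ω‖ ^ 2 / (1 + ‖F ω‖ ^ 2) : ℝ) : ℂ) *
            (phiVec L ν j ω * (starRingEnd ℂ) (phiVec L ν k ω))))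
        volume (-π) π := (continuous_const.mul (hζcont j k)).intervalIntegrable _ _
    have hcomm := Complex.reCLM.intervalIntegral_comp_comm hint
    simp only [Complex.reCLM_apply] at hcomm
    rw [hcomm, intervalIntegral.integral_const_mul]
  simp only [hswap]
  simp only [Matrix.mulVec, dotProduct, Pi.star_apply, RCLike.star_def]
  rw [Complex.re_sum, Finset.mul_sum]
  refine Finset.sum_congr rfl fun j _ => ?_
  rw [Finset.mul_sum, Finset.mul_sum, Complex.re_sum]
  refine Finset.sum_congr rfl fun k _ => ?_
  unfold eps2
  rw [show b j * (((1 / (2 * π) : ℝ) : ℂ) *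
      (∫ ω in (-π)..π,
        (((Mtker N0 σ H ω * ‖F ω‖ ^ 2 / (1 + ‖F ω‖ ^ 2) : ℝ) : ℂ) *
          (phiVec L ν j ω * (starRingEnd ℂ) (phiVec L ν k ω)))) * (starRingEnd ℂ) (b k))
    = ((1 / (2 * π) : ℝ) : ℂ) * (b j * (starRingEnd ℂ) (b k) *
      ∫ ω in (-π)..π,
        (((Mtker N0 σ H ω * ‖F ω‖ ^ 2 / (1 + ‖F ω‖ ^ 2) : ℝ) : ℂ) *
          (phiVec L ν j ω * (starRingEnd ℂ) (phiVec L ν k ω)))) by ring]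
  rw [Complex.re_ofReal_mul]

/-- Equation (27) of Theorem 1 as an upper bound: `J(F) − ε₁†ε₂⁻¹ε₁` dominates
`I_LB` over all square-integrable prefilters `W` and feedback coefficients `b`. -/
theorem stmt17 (L ν : ℕ) (hLν : ν + 1 < L) (h : Fin L → ℂ) (f : Fin (ν + 1) → ℂ)
    (N0 σ : ℝ) (hN0 : 0 < N0) (hσ0 : 0 < σ) (hσ1 : σ ≤ 1)
    (hNegDef : (-(eps2 L ν N0 σ (Hdtft h) (Fdtft f))).PosDef) :
    ∀ W : ℝ → ℂ, Measurable W →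
      IntegrableOn (fun ω => ‖W ω‖ ^ 2) (Set.Icc (-π) π) →
      ∀ b : Fin (L - ν - 1) → ℂ,
        ILB N0 σ W (Hdtft h) (Fdtft f) (Bdtft (L := L) (ν := ν) b) ≤
          Jfun N0 (Hdtft h) (Fdtft f) -
            (star (eps1 L ν N0 σ (Hdtft h) (Fdtft f)) ⬝ᵥ
              (eps2 L ν N0 σ (Hdtft h) (Fdtft f))⁻¹.mulVec
                (eps1 L ν N0 σ (Hdtft h) (Fdtft f))).re := by
  intro W hWm hW2 b
  have hπ : (0:ℝ) < π := Real.pi_pos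
  have hle : (-π : ℝ) ≤ π := by linarith
  have hcH : Continuous (Hdtft h) := cont_Hdtft h
  have hcF : Continuous (Fdtft f) := cont_Fdtft f
  have hcB : Continuous (Bdtft (L := L) (ν := ν) b) := cont_Bdtft (L := L) (ν := ν) b
  set Hd := Hdtft h with hHdd
  set Fd := Fdtft f with hFdd
  set Bd := Bdtft (L := L) (ν := ν) b with hBdd
  have hIg1 : IntervalIntegrable (g1f N0 σ W Hd Fd Bd) volume (-π) π :=
    integ_g1f hN0 hWm hW2 hcH hcF hcB
  have hIr : IntervalIntegrable (rf σ W Hd Fd Bd) volume (-π) π :=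
    integ_rf hWm hW2 hcH hcF hcB
  have hI2r : IntervalIntegrable (fun ω => 2 * rf σ W Hd Fd Bd ω) volume (-π) π :=
    hIr.const_mul 2
  have hIu1 : IntervalIntegrable (u1f N0 Hd Fd) volume (-π) π :=
    (cont_u1f hN0 hcH hcF).intervalIntegrable _ _
  have hIu2 : IntervalIntegrable (u2f N0 σ Hd Fd Bd) volume (-π) π :=
    (cont_u2f σ hN0 hcH hcF hcB).intervalIntegrable _ _
  have hIu3 : IntervalIntegrable (u3f N0 σ Hd Fd Bd) volume (-π) π :=
    (cont_u3f σ hN0 hcH hcF hcB).intervalIntegrable _ _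
  have hILB : ILB N0 σ W Hd Fd Bd =
      (1/(2*π)) * ∫ ω in (-π)..π, (g1f N0 σ W Hd Fd Bd ω + 2 * rf σ W Hd Fd Bd ω) := by
    have h0 : ILB N0 σ W Hd Fd Bd = (1/(2*π)) * ∫ ω in (-π)..π,
        (g1f N0 σ W Hd Fd Bd ω + (1/π) * ∫ x in (-π)..π, rf σ W Hd Fd Bd x) := by
      simp only [ILB, g1f, rf]
    rw [h0, intervalIntegral.integral_add hIg1 intervalIntegrable_const,
      intervalIntegral.integral_const, intervalIntegral.integral_add hIg1 hI2r,
      intervalIntegral.integral_const_mul, smul_eq_mul]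
    have hπ' : π ≠ 0 := ne_of_gt hπ
    field_simp
    ring
  have hpt : ∀ ω ∈ Set.Icc (-π) π, g1f N0 σ W Hd Fd Bd ω + 2 * rf σ W Hd Fd Bd ω ≤
      u1f N0 Hd Fd ω + u2f N0 σ Hd Fd Bd ω + u3f N0 σ Hd Fd Bd ω := by
    intro ω _
    have hk := key_ineq N0 σ hN0 (Fd ω) (W ω) (Hd ω) (Bd ω)
    have hL : g1f N0 σ W Hd Fd Bd ω + 2 * rf σ W Hd Fd Bd ω =
        (Real.log (1 + ‖Fd ω‖ ^ 2) - ‖Fd ω‖ ^ 2 -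
          (‖Fd ω * W ω‖ ^ 2 * (N0 + ‖Hd ω‖ ^ 2) +
            σ * ‖Fd ω * Bd ω‖ ^ 2
            - 2 * σ * ‖Fd ω‖ ^ 2 * (Hd ω * W ω * (starRingEnd ℂ) (Bd ω)).re) /
            (1 + ‖Fd ω‖ ^ 2))
          + 2 * ((starRingEnd ℂ) (Fd ω) * (W ω * Hd ω - (σ : ℂ) * Bd ω)).re := by
      unfold g1f rf Lam; ring
    have hR : u1f N0 Hd Fd ω + u2f N0 σ Hd Fd Bd ω + u3f N0 σ Hd Fd Bd ω =
        1 + Real.log (1 + ‖Fd ω‖ ^ 2)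
          + (-N0 / (N0 + ‖Hd ω‖ ^ 2)) * (1 + ‖Fd ω‖ ^ 2)
          + 2 * σ * (-N0 / (N0 + ‖Hd ω‖ ^ 2)) *
              (Fd ω * (starRingEnd ℂ) (Bd ω)).re
          + (σ ^ 2 * (1 + -N0 / (N0 + ‖Hd ω‖ ^ 2)) - σ) * ‖Fd ω‖ ^ 2 *
              ‖Bd ω‖ ^ 2 / (1 + ‖Fd ω‖ ^ 2) := by
      simp only [u1f, u2f, u3f, Mtker, Mker]; ring
    rw [hL, hR]
    exact hk
  have hmono : (∫ ω in (-π)..π, (g1f N0 σ W Hd Fd Bd ω + 2 * rf σ W Hd Fd Bd ω)) ≤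
      ∫ ω in (-π)..π, (u1f N0 Hd Fd ω + u2f N0 σ Hd Fd Bd ω + u3f N0 σ Hd Fd Bd ω) :=
    intervalIntegral.integral_mono_on hle (hIg1.add hI2r) ((hIu1.add hIu2).add hIu3) hpt
  have hsplit : (∫ ω in (-π)..π, (u1f N0 Hd Fd ω + u2f N0 σ Hd Fd Bd ω + u3f N0 σ Hd Fd Bd ω))
      = (∫ ω in (-π)..π, u1f N0 Hd Fd ω) + (∫ ω in (-π)..π, u2f N0 σ Hd Fd Bd ω)
        + (∫ ω in (-π)..π, u3f N0 σ Hd Fd Bd ω) := by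
    rw [intervalIntegral.integral_add (hIu1.add hIu2) hIu3,
      intervalIntegral.integral_add hIu1 hIu2]
  have hu1 : (1/(2*π)) * (∫ ω in (-π)..π, u1f N0 Hd Fd ω) = Jfun N0 Hd Fd := by
    unfold u1f Jfun
    rw [intervalIntegral.integral_add (f := fun _ => (1:ℝ))
      (g := fun ω => Real.log (1 + ‖Fd ω‖ ^ 2) + Mker N0 Hd ω * (1 + ‖Fd ω‖ ^ 2))
      intervalIntegrable_const
      ((((cont_A hcF).log fun ω => ne_of_gt (Apos Fd ω)).add
        ((cont_Mker hN0 hcH).mul (cont_A hcF))).intervalIntegrable _ _)]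
    rw [intervalIntegral.integral_const]
    have hπ' : π ≠ 0 := ne_of_gt hπ
    simp only [smul_eq_mul, mul_one]
    field_simp
    ring
  have hu2 := E2lem L ν σ hN0 hcH hcF b
  have hu3 := E3lem L ν σ hN0 hcH hcF b
  have hq := quad_bound hNegDef (eps1 L ν N0 σ Hd Fd) (star b)
  rw [star_star] at hq
  have hfac : (0:ℝ) ≤ 1/(2*π) := by positivity
  have hchain : ILB N0 σ W Hd Fd Bd ≤ Jfun N0 Hd Fd + 2 * (b ⬝ᵥ eps1 L ν N0 σ Hd Fd).re +
      (b ⬝ᵥ (eps2 L ν N0 σ Hd Fd *ᵥ star b)).re := by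
    rw [hILB, ← hu1, ← hu2, ← hu3]
    calc (1/(2*π)) * ∫ ω in (-π)..π, (g1f N0 σ W Hd Fd Bd ω + 2 * rf σ W Hd Fd Bd ω)
        ≤ (1/(2*π)) * ∫ ω in (-π)..π,
            (u1f N0 Hd Fd ω + u2f N0 σ Hd Fd Bd ω + u3f N0 σ Hd Fd Bd ω) :=
          mul_le_mul_of_nonneg_left hmono hfac
      _ = _ := by rw [hsplit]; ring
  have hfin : Jfun N0 Hd Fd + 2 * (b ⬝ᵥ eps1 L ν N0 σ Hd Fd).re +
      (b ⬝ᵥ (eps2 L ν N0 σ Hd Fd *ᵥ star b)).re ≤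
      Jfun N0 Hd Fd - (star (eps1 L ν N0 σ Hd Fd) ⬝ᵥ
        (eps2 L ν N0 σ Hd Fd)⁻¹.mulVec (eps1 L ν N0 σ Hd Fd)).re := by
    linarith [hq]
  exact le_trans hchain hfin
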